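/- Let n, d ∈ ℕ with 1 ≤ d ≤ n/3, and let k be an integer with c(Q_n) ≤ k and k < (1/2) · 2^n · (d/(e·n))^d. Then capt_k(Q_n) > d. -/

import Mathlib

open SimpleGraph Finset

/-- One step of a player in a reflexive graph: stay put (the loop) or move along an edge. -/
def stepRel {V : Type*} (G : SimpleGraph V) (u v : V) : Prop := u = v ∨ G.Adj u v

/-- `CatchIn G t c r`: with the cops currently at positions `c` and the robber at `r`
(cops to move next), the cops can guarantee to capture the robber within `t` further
rounds (a round consists of a cops' move followed by a robber's move; capture means
some cop occupies the robber's vertex). -/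
def CatchIn {V : Type*} (G : SimpleGraph V) {k : ℕ} : ℕ → (Fin k → V) → V → Prop
  | 0, c, r => ∃ i, c i = r
  | (t + 1), c, r => (∃ i, c i = r) ∨
      ∃ c' : Fin k → V, (∀ i, stepRel G (c i) (c' i)) ∧
        ((∃ i, c' i = r) ∨ ∀ r', stepRel G r r' → CatchIn G t c' r')

/-- `k` cops have a strategy capturing the robber within `t` rounds (not counting
round 0, in which the cops choose starting positions and then the robber, knowing
the cops' positions, chooses hers). -/
def CopsWinIn {V : Type*} (G : SimpleGraph V) (k t : ℕ) : Prop :=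
  ∃ c₀ : Fin k → V, ∀ r₀ : V, CatchIn G t c₀ r₀

/-- The cop number: the least `k` such that `k` cops have a winning strategy. -/
noncomputable def copNumber {V : Type*} (G : SimpleGraph V) : ℕ :=
  sInf {k | ∃ t, CopsWinIn G k t}

/-- The `k`-capture time: the least `t` such that `k` cops can guarantee capture
within `t` rounds. -/
noncomputable def captTime {V : Type*} (G : SimpleGraph V) (k : ℕ) : ℕ :=
  sInf {t | CopsWinIn G k t}

/-- The metric `k`-center radius: the least `r` such that some set of at most `k`
vertices is within distance `r` of every vertex. -/
noncomputable def radK {V : Type*} (G : SimpleGraph V) (k : ℕ) : ℕ :=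
  sInf {r | ∃ S : Finset V, S.Nonempty ∧ S.card ≤ k ∧ ∀ v, ∃ s ∈ S, G.dist v s ≤ r}

/-- `H ⊆ V(G)` induces a retract of the reflexive graph `G`: there is a map
`f : V(G) → H` fixing `H` pointwise such that every edge `uv` of `G` is sent to a
single vertex or to an edge. -/
def IsRetract {V : Type*} (G : SimpleGraph V) (H : Set V) : Prop :=
  ∃ f : V → V, (∀ v, f v ∈ H) ∧ (∀ v ∈ H, f v = v) ∧
    ∀ u v, G.Adj u v → f u = f v ∨ G.Adj (f u) (f v)

/-- The hypercube `Q n`: vertices are binary strings of length `n`, adjacent iff they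
differ in exactly one coordinate (loops at every vertex are implicit). -/
def hypercube (n : ℕ) : SimpleGraph (Fin n → Bool) :=
  SimpleGraph.fromRel (fun u v => ∃ j, u j ≠ v j ∧ ∀ i, i ≠ j → u i = v i)

-- auxiliary

/-- Number of differing coordinates. -/
def dC {n : ℕ} (u v : Fin n → Bool) : ℕ := (Finset.univ.filter (fun j => u j ≠ v j)).card

lemma dC_self {n : ℕ} (u : Fin n → Bool) : dC u u = 0 := by simp [dC]

lemma dC_triangle {n : ℕ} (u v w : Fin n → Bool) : dC u w ≤ dC u v + dC v w := by
  classical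
  have hsub : (Finset.univ.filter (fun j => u j ≠ w j)) ⊆
      (Finset.univ.filter (fun j => u j ≠ v j)) ∪ (Finset.univ.filter (fun j => v j ≠ w j)) := by
    intro j hj
    simp only [Finset.mem_filter, Finset.mem_union, Finset.mem_univ, true_and] at *
    by_contra h
    push_neg at h
    exact hj (h.1.trans h.2)
  exact (Finset.card_le_card hsub).trans (Finset.card_union_le _ _)

lemma adj_dC {n : ℕ} {u v : Fin n → Bool} (h : (hypercube n).Adj u v) : dC u v ≤ 1 := by
  classical
  rw [hypercube, SimpleGraph.fromRel_adj] at h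
  obtain ⟨-, h⟩ := h
  have : ∃ j : Fin n, ∀ i, i ≠ j → u i = v i := by
    rcases h with ⟨j, -, hall⟩ | ⟨j, -, hall⟩
    · exact ⟨j, hall⟩
    · exact ⟨j, fun i hi => (hall i hi).symm⟩
  obtain ⟨j, hall⟩ := this
  have hsub : (Finset.univ.filter (fun i => u i ≠ v i)) ⊆ {j} := by
    intro i hi
    simp only [Finset.mem_filter, Finset.mem_univ, true_and] at hi
    simp only [Finset.mem_singleton]
    by_contra hij
    exact hi (hall i hij)
  simpa [dC] using (Finset.card_le_card hsub)

lemma step_dC {n : ℕ} {u v : Fin n → Bool} (h : stepRel (hypercube n) u v) : dC u v ≤ 1 := by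
  rcases h with h | h
  · subst h; simp [dC_self]
  · exact adj_dC h

lemma catch_dC {n k : ℕ} : ∀ (t : ℕ) (c : Fin k → (Fin n → Bool)) (r : Fin n → Bool),
    CatchIn (hypercube n) t c r → ∃ i, dC (c i) r ≤ t := by
  intro t
  induction t with
  | zero =>
    intro c r h
    obtain ⟨i, hi⟩ := h
    exact ⟨i, by rw [hi, dC_self]⟩
  | succ t ih =>
    intro c r h
    rw [CatchIn] at h
    rcases h with ⟨i, hi⟩ | ⟨c', hstep, hc⟩
    · exact ⟨i, by rw [hi, dC_self]; omega⟩
    · rcases hc with ⟨i, hi⟩ | hc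
      · refine ⟨i, ?_⟩
        have h0 : dC (c' i) r = 0 := by rw [hi]; exact dC_self _
        calc dC (c i) r ≤ dC (c i) (c' i) + dC (c' i) r := dC_triangle _ _ _
        _ ≤ 1 + 0 := by rw [h0]; exact add_le_add (step_dC (hstep i)) le_rfl
        _ ≤ t + 1 := by omega
      · obtain ⟨i, hi⟩ := ih c' r (hc r (Or.inl rfl))
        refine ⟨i, ?_⟩
        calc dC (c i) r ≤ dC (c i) (c' i) + dC (c' i) r := dC_triangle _ _ _
        _ ≤ 1 + t := add_le_add (step_dC (hstep i)) hi
        _ = t + 1 := by omega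

lemma ball_card {n : ℕ} (v : Fin n → Bool) (d : ℕ) :
    (Finset.univ.filter (fun u : Fin n → Bool => dC v u ≤ d)).card ≤
      ∑ i ∈ Finset.range (d + 1), n.choose i := by
  classical
  have h := Finset.card_le_card_of_injOn
    (f := fun u : Fin n → Bool => Finset.univ.filter (fun j => v j ≠ u j))
    (t := (Finset.range (d + 1)).biUnion (fun i => Finset.powersetCard i Finset.univ))
    (s := Finset.univ.filter (fun u : Fin n → Bool => dC v u ≤ d))
    ?_ ?_
  · refine h.trans <| (Finset.card_biUnion_le).trans ?_
    apply Finset.sum_le_sum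
    intro i _
    rw [Finset.card_powersetCard, Finset.card_univ, Fintype.card_fin]
  · intro u hu
    rw [Finset.mem_coe] at hu ⊢
    simp only [Finset.mem_filter, Finset.mem_univ, true_and] at hu
    rw [Finset.mem_biUnion]
    refine ⟨(Finset.univ.filter (fun j => v j ≠ u j)).card, ?_, ?_⟩
    · rw [Finset.mem_range]
      have : dC v u = (Finset.univ.filter (fun j => v j ≠ u j)).card := rfl
      omega
    · rw [Finset.mem_powersetCard]
      exact ⟨Finset.subset_univ _, rfl⟩
  · intro u hu u' hu' heq
    funext j
    have : j ∈ Finset.univ.filter (fun j => v j ≠ u j) ↔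
        j ∈ Finset.univ.filter (fun j => v j ≠ u' j) := by
      rw [show (Finset.univ.filter fun j => v j ≠ u j) =
          Finset.univ.filter fun j => v j ≠ u' j from heq]
    simp only [Finset.mem_filter, Finset.mem_univ, true_and] at this
    cases h1 : u j <;> cases h2 : u' j <;> cases h3 : v j <;> simp_all

lemma copsWinIn_mono {V : Type*} (G : SimpleGraph V) {k k' t : ℕ} (hk : 0 < k)
    (hkk : k ≤ k') : CopsWinIn G k t → CopsWinIn G k' t := by
  rintro ⟨c₀, hc₀⟩
  have hk0 : 0 < k := hk
  set f : Fin k' → Fin k := fun i => if h : (i : ℕ) < k then ⟨i, h⟩ else ⟨0, hk0⟩ with hf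
  have hsurj : Function.Surjective f := by
    intro j
    refine ⟨⟨j, lt_of_lt_of_le j.2 hkk⟩, ?_⟩
    simp [hf, j.2, Fin.ext_iff]
  have key : ∀ (t : ℕ) (c : Fin k → V) (r : V), CatchIn G t c r → CatchIn G t (c ∘ f) r := by
    intro t
    induction t with
    | zero =>
      rintro c r ⟨i, hi⟩
      obtain ⟨j, hj⟩ := hsurj i
      exact ⟨j, by simp [Function.comp, hj, hi]⟩
    | succ t ih =>
      rintro c r h
      rw [CatchIn] at h ⊢
      rcases h with ⟨i, hi⟩ | ⟨c', hstep, hc⟩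
      · obtain ⟨j, hj⟩ := hsurj i
        exact Or.inl ⟨j, by simp [Function.comp, hj, hi]⟩
      · refine Or.inr ⟨c' ∘ f, fun i => hstep (f i), ?_⟩
        rcases hc with ⟨i, hi⟩ | hc
        · obtain ⟨j, hj⟩ := hsurj i
          exact Or.inl ⟨j, by simp [Function.comp, hj, hi]⟩
        · exact Or.inr fun r' hr' => ih c' r' (hc r' hr')
  exact ⟨c₀ ∘ f, fun r => key t c₀ r (hc₀ r)⟩

lemma no_zero_cops {V : Type*} (G : SimpleGraph V) (t : ℕ) (r : V) :
    ¬ CatchIn G t (fun i : Fin 0 => r) r := by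
  induction t generalizing r with
  | zero => rintro ⟨i, -⟩; exact i.elim0
  | succ t ih =>
    rintro (⟨i, -⟩ | ⟨c', -, (⟨i, -⟩ | hc)⟩)
    · exact i.elim0
    · exact i.elim0
    · have := hc r (Or.inl rfl)
      have hc' : c' = fun i : Fin 0 => r := funext fun i => i.elim0
      rw [hc'] at this
      exact ih r this

lemma full_cops_win {V : Type*} [Fintype V] [DecidableEq V] (G : SimpleGraph V) :
    CopsWinIn G (Fintype.card V) 0 :=
  ⟨fun i => (Fintype.equivFin V).symm i, fun r => ⟨Fintype.equivFin V r, Equiv.symm_apply_apply _ _⟩⟩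

lemma sum_choose_le (n d : ℕ) (hd : 1 ≤ d) (hdn : 3 * d ≤ n) :
    (∑ i ∈ Finset.range (d + 1), (n.choose i : ℝ)) * ((d : ℝ) / n) ^ d ≤ Real.exp 1 ^ d := by
  have hn1 : 1 ≤ n := by omega
  have hn0 : (0 : ℝ) < n := by exact_mod_cast Nat.lt_of_lt_of_le Nat.zero_lt_one hn1
  set x : ℝ := (d : ℝ) / n with hxdef
  have hx0 : 0 < x := by positivity
  have hx1 : x ≤ 1 := by
    rw [hxdef, div_le_one hn0]
    exact_mod_cast (by omega : d ≤ n)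
  have hxp : (x + 1) ^ n = ∑ i ∈ Finset.range (n + 1), (n.choose i : ℝ) * x ^ i := by
    rw [add_pow]
    exact Finset.sum_congr rfl fun i _ => by ring
  have hnx : (n : ℝ) * x = d := by
    rw [hxdef]; field_simp
  calc (∑ i ∈ Finset.range (d + 1), (n.choose i : ℝ)) * x ^ d
      = ∑ i ∈ Finset.range (d + 1), (n.choose i : ℝ) * x ^ d := Finset.sum_mul ..
    _ ≤ ∑ i ∈ Finset.range (d + 1), (n.choose i : ℝ) * x ^ i := by
        apply Finset.sum_le_sum
        intro i hi
        rw [Finset.mem_range] at hi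
        exact mul_le_mul_of_nonneg_left
          (pow_le_pow_of_le_one hx0.le hx1 (by omega)) (Nat.cast_nonneg _)
    _ ≤ ∑ i ∈ Finset.range (n + 1), (n.choose i : ℝ) * x ^ i := by
        apply Finset.sum_le_sum_of_subset_of_nonneg
        · exact Finset.range_subset_range.mpr (by omega)
        · intro i _ _; positivity
    _ = (x + 1) ^ n := hxp.symm
    _ ≤ Real.exp x ^ n := by
        apply pow_le_pow_left₀ (by positivity)
        linarith [Real.add_one_le_exp x]
    _ = Real.exp 1 ^ d := by
        rw [← Real.exp_nat_mul, hnx]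
        rw [show ((d : ℝ)) = (d : ℕ) * (1 : ℝ) by simp, Real.exp_nat_mul]

/-- Lower bound on the capture time of hypercubes with many cops, second form:
for `1 ≤ d ≤ n/3`, if `c(Q_n) ≤ k < (1/2) 2^n (d/(e n))^d`, then `capt_k(Q_n) > d`. -/
theorem captTime_hypercube_lower_large' (n d k : ℕ) (hd : 1 ≤ d)
    (hdn : (d : ℝ) ≤ (n : ℝ) / 3)
    (hk : copNumber (hypercube n) ≤ k)
    (hk' : (k : ℝ) < 1 / 2 * (2 : ℝ) ^ n * ((d : ℝ) / (Real.exp 1 * n)) ^ d) :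
    d < captTime (hypercube n) k := by
  classical
  have hdn' : 3 * d ≤ n := by
    have : (3 : ℝ) * d ≤ n := by linarith
    exact_mod_cast this
  have hn1 : 1 ≤ n := by omega
  -- the cops-win sets are nonempty
  have hfull : CopsWinIn (hypercube n) (Fintype.card (Fin n → Bool)) 0 := full_cops_win _
  have hne : Set.Nonempty {k' | ∃ t, CopsWinIn (hypercube n) k' t} := ⟨_, 0, hfull⟩
  have hmem : ∃ t, CopsWinIn (hypercube n) (copNumber (hypercube n)) t := Nat.sInf_mem hne
  obtain ⟨t₀, ht₀⟩ := hmem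
  have hcop_pos : 0 < copNumber (hypercube n) := by
    rcases Nat.eq_zero_or_pos (copNumber (hypercube n)) with h0 | h
    · exfalso
      rw [h0] at ht₀
      obtain ⟨c₀, hc₀⟩ := ht₀
      have hc : c₀ = fun _ : Fin 0 => (fun _ => false : Fin n → Bool) :=
        funext fun i => i.elim0
      have := hc₀ (fun _ => false)
      rw [hc] at this
      exact no_zero_cops (hypercube n) t₀ _ this
    · exact h
  have hwin_k : Set.Nonempty {t | CopsWinIn (hypercube n) k t} :=
    ⟨t₀, copsWinIn_mono _ hcop_pos hk ht₀⟩
  have hcapt : CopsWinIn (hypercube n) k (captTime (hypercube n) k) := Nat.sInf_mem hwin_k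
  by_contra hcon
  push_neg at hcon
  obtain ⟨c₀, hc₀⟩ := hcapt
  have hcover : ∀ r : Fin n → Bool, ∃ i, dC (c₀ i) r ≤ d := by
    intro r
    obtain ⟨i, hi⟩ := catch_dC _ c₀ r (hc₀ r)
    exact ⟨i, hi.trans hcon⟩
  set B := ∑ i ∈ Finset.range (d + 1), n.choose i with hBdef
  have hcount : 2 ^ n ≤ k * B := by
    have hsub : (Finset.univ : Finset (Fin n → Bool)) ⊆
        Finset.univ.biUnion (fun i : Fin k =>
          Finset.univ.filter (fun u => dC (c₀ i) u ≤ d)) := by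
      intro r _
      rw [Finset.mem_biUnion]
      obtain ⟨i, hi⟩ := hcover r
      exact ⟨i, Finset.mem_univ _, by simp [hi]⟩
    calc 2 ^ n = (Finset.univ : Finset (Fin n → Bool)).card := by
          rw [Finset.card_univ, Fintype.card_fun]; simp
      _ ≤ _ := Finset.card_le_card hsub
      _ ≤ ∑ i : Fin k, (Finset.univ.filter (fun u => dC (c₀ i) u ≤ d)).card :=
          Finset.card_biUnion_le
      _ ≤ ∑ _i : Fin k, B := Finset.sum_le_sum (fun i _ => ball_card _ _)
      _ = k * B := by simp [Finset.sum_const, mul_comm]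
  -- real arithmetic
  have hn0 : (0 : ℝ) < n := by exact_mod_cast Nat.lt_of_lt_of_le Nat.zero_lt_one hn1
  set x : ℝ := (d : ℝ) / n with hxdef
  have hx0 : 0 < x := by positivity
  have hB : (B : ℝ) = ∑ i ∈ Finset.range (d + 1), (n.choose i : ℝ) := by
    rw [hBdef]; push_cast; ring
  have hBx : (B : ℝ) * x ^ d ≤ Real.exp 1 ^ d := by
    rw [hB]; exact sum_choose_le n d hd hdn'
  have hE : (0 : ℝ) < Real.exp 1 ^ d := by positivity
  have hkey : ((d : ℝ) / (Real.exp 1 * n)) ^ d = x ^ d / Real.exp 1 ^ d := by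
    rw [hxdef, div_pow, mul_pow, div_pow, div_div, mul_comm]
  rw [hkey] at hk'
  have h1 : (2 : ℝ) ^ n ≤ (k : ℝ) * B := by exact_mod_cast hcount
  have h2 : (2 : ℝ) ^ n * x ^ d ≤ (k : ℝ) * Real.exp 1 ^ d := by
    calc (2 : ℝ) ^ n * x ^ d ≤ ((k : ℝ) * B) * x ^ d :=
          mul_le_mul_of_nonneg_right h1 (by positivity)
      _ = (k : ℝ) * ((B : ℝ) * x ^ d) := by ring
      _ ≤ (k : ℝ) * Real.exp 1 ^ d :=
          mul_le_mul_of_nonneg_left hBx (Nat.cast_nonneg _)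
  have h3 : (k : ℝ) * Real.exp 1 ^ d < 1 / 2 * 2 ^ n * x ^ d := by
    calc (k : ℝ) * Real.exp 1 ^ d < (1 / 2 * 2 ^ n * (x ^ d / Real.exp 1 ^ d)) * Real.exp 1 ^ d :=
          mul_lt_mul_of_pos_right hk' hE
      _ = 1 / 2 * 2 ^ n * x ^ d := by field_simp
  have hpos : (0 : ℝ) < 2 ^ n * x ^ d := by positivity
  linarith
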